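/- Let Ω be a finite set, let μ be a fully supported probability distribution on Ω, and let P be a row-stochastic matrix indexed by Ω that is reversible with respect to μ, i.e., μ(x)P(x,y) = μ(y)P(y,x) for all x, y ∈ Ω. Suppose there is α ∈ (0,1] such that for every probability distribution ν on Ω, D(ν P ‖ μ P) ≤ (1−α)·D(ν ‖ μ). Then for every f : Ω → ℝ_{>0} with E_μ[f] = 1, α·Ent_μ[f] ≤ E_P(f, log f), where E_P(f, log f) = ∑_{x∈Ω} μ(x)·((I−P)f)(x)·log f(x). -/
import Mathlib


open Finset

theorem stmt_10 {Ω : Type*} [Fintype Ω]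
    (μ : Ω → ℝ) (hμpos : ∀ x, 0 < μ x) (hμ1 : ∑ x, μ x = 1)
    (P : Ω → Ω → ℝ) (hP0 : ∀ x y, 0 ≤ P x y) (hP1 : ∀ x, ∑ y, P x y = 1)
    (hrev : ∀ x y, μ x * P x y = μ y * P y x)
    (α : ℝ) (hα0 : 0 < α) (hα1 : α ≤ 1)
    (hcontract : ∀ ν : Ω → ℝ, (∀ x, 0 ≤ ν x) → (∑ x, ν x = 1) →
      ∑ y, (∑ x, ν x * P x y) *
          Real.log ((∑ x, ν x * P x y) / (∑ x, μ x * P x y)) ≤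
        (1 - α) * ∑ x, ν x * Real.log (ν x / μ x)) :
    ∀ f : Ω → ℝ, (∀ x, 0 < f x) → (∑ x, μ x * f x = 1) →
      α * (∑ x, μ x * (f x * Real.log (f x)) -
            (∑ x, μ x * f x) * Real.log (∑ x, μ x * f x)) ≤
        ∑ x, μ x * ((f x - ∑ y, P x y * f y) * Real.log (f x)) := by
  intro f hf hf1
  set g : Ω → ℝ := fun y => ∑ x, P y x * f x with hg
  have hgpos : ∀ y, 0 < g y := by
    intro y
    apply Finset.sum_pos'
    · intro i _; exact mul_nonneg (hP0 y i) (hf i).le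
    · have h1 : ∑ x, P y x ≠ 0 := by rw [hP1]; norm_num
      obtain ⟨i, _, hi⟩ := Finset.exists_ne_zero_of_sum_ne_zero h1
      exact ⟨i, Finset.mem_univ i, mul_pos (lt_of_le_of_ne (hP0 y i) (Ne.symm hi)) (hf i)⟩
  have hstat : ∀ y, ∑ x, μ x * P x y = μ y := by
    intro y
    calc ∑ x, μ x * P x y = ∑ x, μ y * P y x := by
          exact Finset.sum_congr rfl fun x _ => hrev x y
      _ = μ y * ∑ x, P y x := by rw [Finset.mul_sum]
      _ = μ y := by rw [hP1, mul_one]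
  have hB : ∀ y, ∑ x, (μ x * f x) * P x y = μ y * g y := by
    intro y
    calc ∑ x, (μ x * f x) * P x y = ∑ x, μ y * (P y x * f x) := by
          refine Finset.sum_congr rfl fun x _ => ?_
          calc (μ x * f x) * P x y = (μ x * P x y) * f x := by ring
            _ = (μ y * P y x) * f x := by rw [hrev]
            _ = μ y * (P y x * f x) := by ring
      _ = μ y * g y := by rw [← Finset.mul_sum]
  have hsumg : ∑ y, μ y * g y = 1 := by
    calc ∑ y, μ y * g y = ∑ y, ∑ x, (μ x * f x) * P x y := by
          exact (Finset.sum_congr rfl fun y _ => (hB y).symm)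
      _ = ∑ x, ∑ y, (μ x * f x) * P x y := Finset.sum_comm
      _ = ∑ x, μ x * f x := by
          refine Finset.sum_congr rfl fun x _ => ?_
          rw [← Finset.mul_sum, hP1, mul_one]
      _ = 1 := hf1
  -- contraction applied to ν = μ * f
  have hc := hcontract (fun x => μ x * f x)
      (fun x => mul_nonneg (hμpos x).le (hf x).le) hf1
  have hcL : ∑ y, (μ y * g y) * Real.log (g y) ≤
      (1 - α) * ∑ x, μ x * (f x * Real.log (f x)) := by
    have e1 : ∀ y, (∑ x, (μ x * f x) * P x y) *
        Real.log ((∑ x, (μ x * f x) * P x y) / (∑ x, μ x * P x y)) =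
        (μ y * g y) * Real.log (g y) := by
      intro y
      rw [hB, hstat]
      congr 1
      rw [mul_comm (μ y) (g y), mul_div_assoc, div_self (hμpos y).ne', mul_one]
    have e2 : ∀ x, (μ x * f x) * Real.log ((μ x * f x) / (μ x)) =
        μ x * (f x * Real.log (f x)) := by
      intro x
      rw [mul_comm (μ x) (f x), mul_div_assoc, div_self (hμpos x).ne', mul_one]
      ring
    calc ∑ y, (μ y * g y) * Real.log (g y)
        = ∑ y, (∑ x, (μ x * f x) * P x y) *
          Real.log ((∑ x, (μ x * f x) * P x y) / (∑ x, μ x * P x y)) :=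
          (Finset.sum_congr rfl fun y _ => (e1 y).symm)
      _ ≤ (1 - α) * ∑ x, (μ x * f x) * Real.log ((μ x * f x) / (μ x)) := hc
      _ = (1 - α) * ∑ x, μ x * (f x * Real.log (f x)) := by
          congr 1; exact Finset.sum_congr rfl fun x _ => e2 x
  -- Gibbs: ∑ μ g log f ≤ ∑ μ g log g
  have hgibbs : ∑ y, (μ y * g y) * Real.log (f y) ≤
      ∑ y, (μ y * g y) * Real.log (g y) := by
    have key : ∀ y, (μ y * g y) - (μ y * f y) ≤
        (μ y * g y) * (Real.log (g y) - Real.log (f y)) := by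
      intro y
      have hp : 0 < μ y * g y := mul_pos (hμpos y) (hgpos y)
      have hq : 0 < μ y * f y := mul_pos (hμpos y) (hf y)
      have hlog : Real.log (f y / g y) ≤ f y / g y - 1 :=
        Real.log_le_sub_one_of_pos (div_pos (hf y) (hgpos y))
      rw [Real.log_div (hf y).ne' (hgpos y).ne'] at hlog
      have h2 : (μ y * g y) * (Real.log (f y) - Real.log (g y)) ≤
          (μ y * g y) * (f y / g y - 1) := by
        exact mul_le_mul_of_nonneg_left hlog hp.le
      have h3 : (μ y * g y) * (f y / g y - 1) = μ y * f y - μ y * g y := by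
        rw [mul_sub, mul_one, mul_assoc, mul_div_assoc', mul_div_cancel_left₀ _ (hgpos y).ne']
      nlinarith
    have hsum : ∑ y, ((μ y * g y) - (μ y * f y)) ≤ ∑ y, (μ y * g y) * (Real.log (g y) - Real.log (f y)) := Finset.sum_le_sum (fun y _ => key y)
    rw [Finset.sum_sub_distrib] at hsum
    have hmf : ∑ y, μ y * f y = 1 := hf1
    have : (0:ℝ) ≤ ∑ y, (μ y * g y) * (Real.log (g y) - Real.log (f y)) := by
      rw [hsumg, hmf] at hsum; linarith
    have expand : ∑ y, (μ y * g y) * (Real.log (g y) - Real.log (f y)) =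
        ∑ y, (μ y * g y) * Real.log (g y) - ∑ y, (μ y * g y) * Real.log (f y) := by
      rw [← Finset.sum_sub_distrib]; exact Finset.sum_congr rfl fun y _ => by ring
    linarith [expand ▸ this]
  -- Finish
  rw [hf1, Real.log_one, mul_zero, sub_zero]
  have expand2 : ∑ x, μ x * ((f x - ∑ y, P x y * f y) * Real.log (f x)) =
      ∑ x, μ x * (f x * Real.log (f x)) - ∑ x, (μ x * g x) * Real.log (f x) := by
    rw [← Finset.sum_sub_distrib]
    refine Finset.sum_congr rfl fun x _ => ?_
    have : (∑ y, P x y * f y) = g x := rfl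
    rw [this]; ring
  rw [expand2]
  nlinarith [hgibbs, hcL]
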